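/- arXiv:1104.5100 — 3 statements merged into one kernel-verified Lean document; each statement's English description precedes it below -/
import Mathlib

section
/- If the sequence 1/(n^u · |sin n|^v) (for positive reals u, v) converges to 0, then for every real k > 1 + u/v, the inequality |π − p/q| < 1/q^k holds for only finitely many coprime positive integers (p, q); i.e., the irrationality measure of π is at most 1 + u/v. -/
open Real Filter

lemma aux_sin_nat_ne_zero {n : ℕ} (hn : 0 < n) : Real.sin n ≠ 0 := by
  intro h
  rw [Real.sin_eq_zero_iff] at h
  obtain ⟨m, hm⟩ := h
  have hm0 : m ≠ 0 := by
    rintro rfl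
    simp at hm
    exact_mod_cast (Nat.cast_pos.mpr hn).ne' hm.symm
  have : Irrational ((m : ℝ) * π) := irrational_pi.intCast_mul hm0
  rw [hm] at this
  exact (Nat.not_irrational n) this

lemma aux_abs_sin_le {p q : ℕ} : |Real.sin p| ≤ |(p : ℝ) - q * π| := by
  have h : Real.sin ((p : ℝ) - q * π + q * π) = (-1) ^ q * Real.sin ((p : ℝ) - q * π) :=
    Real.sin_add_nat_mul_pi _ q
  rw [sub_add_cancel] at h
  calc |Real.sin p| = |(-1 : ℝ) ^ q * Real.sin ((p : ℝ) - q * π)| := by rw [h]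
    _ = |Real.sin ((p : ℝ) - q * π)| := by
        rw [abs_mul, abs_pow, abs_neg, abs_one, one_pow, one_mul]
    _ ≤ |(p : ℝ) - q * π| := Real.abs_sin_le_abs

open Real Filter in
theorem irrationality_measure_upper (u v : ℝ) (hu : 0 < u) (hv : 0 < v)
    (hconv : Tendsto (fun n : ℕ => 1 / ((n : ℝ) ^ u * |Real.sin n| ^ v)) atTop (nhds 0)) :
    ∀ k : ℝ, 1 + u / v < k →
      {pq : ℕ × ℕ | 0 < pq.1 ∧ 0 < pq.2 ∧ Nat.Coprime pq.1 pq.2 ∧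
        |π - (pq.1 : ℝ) / (pq.2 : ℝ)| < 1 / (pq.2 : ℝ) ^ k}.Finite := by
  intro k hk
  set r : ℝ := u / v with hrdef
  have hr0 : 0 < r := div_pos hu hv
  have hε : 0 < k - 1 - r := by linarith
  have hk0 : (0 : ℝ) ≤ k := by linarith
  -- eventual lower bound on |sin n|
  obtain ⟨N, hN⟩ := eventually_atTop.mp (hconv.eventually_lt_const one_pos)
  have hsin : ∀ n : ℕ, 0 < n → N ≤ n → (n : ℝ) ^ (-r) < |Real.sin n| := by
    intro n h1 h2
    have hs : Real.sin n ≠ 0 := aux_sin_nat_ne_zero h1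
    have habs : 0 < |Real.sin n| := abs_pos.mpr hs
    have hn1 : (1 : ℝ) ≤ n := by exact_mod_cast h1
    have hA : (0 : ℝ) < (n : ℝ) ^ u := by positivity
    have hD : 0 < (n : ℝ) ^ u * |Real.sin n| ^ v := by positivity
    have hD1 : 1 < (n : ℝ) ^ u * |Real.sin n| ^ v := (div_lt_one hD).mp (hN n h2)
    -- (n:ℝ)^(-u) < |sin n|^v
    have h3 : (n : ℝ) ^ (-u) < |Real.sin n| ^ v := by
      rw [Real.rpow_neg (by positivity)]
      rw [inv_lt_iff_one_lt_mul₀ hA]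
      linarith [hD1, mul_comm ((n : ℝ) ^ u) (|Real.sin n| ^ v)]
    by_contra hle
    push_neg at hle
    have : |Real.sin n| ^ v ≤ ((n : ℝ) ^ (-r)) ^ v :=
      Real.rpow_le_rpow habs.le hle hv.le
    have heq : (((n : ℝ) ^ (-r)) ^ v) = (n : ℝ) ^ (-u) := by
      rw [← Real.rpow_mul (by positivity)]
      congr 1
      rw [hrdef]
      field_simp
    rw [heq] at this
    linarith
  set C : ℝ := Real.exp (r * Real.log 5 / (k - 1 - r)) with hCdef
  have hC0 : 0 < C := Real.exp_pos _
  set B : ℕ := max N ⌈5 * C⌉₊ with hBdef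
  apply Set.Finite.subset ((Set.finite_Iic B).prod (Set.finite_Iic B))
  rintro ⟨p, q⟩ ⟨hp, hq, hcop, hlt⟩
  simp only [Set.mem_prod, Set.mem_Iic]
  have hq0 : (0 : ℝ) < q := by exact_mod_cast hq
  have hq1 : (1 : ℝ) ≤ q := by exact_mod_cast hq
  have hqk0 : (0 : ℝ) < (q : ℝ) ^ k := by positivity
  have hqk1 : (1 : ℝ) ≤ (q : ℝ) ^ k := Real.one_le_rpow hq1 hk0
  have h1 : |π - (p : ℝ) / q| < 1 := hlt.trans_le ((div_le_one hqk0).mpr hqk1)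
  obtain ⟨ha, hb⟩ := abs_lt.mp h1
  have hπ3 := Real.pi_gt_three
  have hπ315 := Real.pi_lt_d2
  -- p/q bounds
  have hdivlt : (p : ℝ) / q < 5 := by linarith
  have hdivgt : (2 : ℝ) < (p : ℝ) / q := by linarith
  have hp5q : (p : ℝ) < 5 * q := by
    have := (div_lt_iff₀ hq0).mp hdivlt
    linarith
  have h2qp : 2 * (q : ℝ) < p := by
    have := (lt_div_iff₀ hq0).mp hdivgt
    linarith
  have hqltp : q < p := by
    have : (q : ℝ) < p := by linarith
    exact_mod_cast this
  rcases le_or_gt p N with hpN | hpN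
  · exact ⟨le_max_of_le_left hpN, le_max_of_le_left (le_trans hqltp.le hpN)⟩
  · -- main case
    have hs1 : (p : ℝ) ^ (-r) < |Real.sin p| := hsin p hp hpN.le
    have hs2 : |Real.sin p| ≤ |(p : ℝ) - q * π| := aux_abs_sin_le
    have hs3 : |(p : ℝ) - q * π| = q * |π - (p : ℝ) / q| := by
      have he : (p : ℝ) - q * π = -(q * (π - (p : ℝ) / q)) := by
        field_simp
        ring
      rw [he, abs_neg, abs_mul, abs_of_pos hq0]
    have hs4 : (p : ℝ) ^ (-r) < (q : ℝ) / (q : ℝ) ^ k := by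
      have : (q : ℝ) * |π - (p : ℝ) / q| < (q : ℝ) * (1 / (q : ℝ) ^ k) :=
        (mul_lt_mul_iff_right₀ hq0).mpr hlt
      rw [mul_one_div] at this
      calc (p : ℝ) ^ (-r) < |Real.sin p| := hs1
        _ ≤ |(p : ℝ) - q * π| := hs2
        _ = q * |π - (p : ℝ) / q| := hs3
        _ < (q : ℝ) / (q : ℝ) ^ k := this
    have h5q : (0 : ℝ) < 5 * q := by linarith
    have hs5 : (5 * (q : ℝ)) ^ (-r) < (q : ℝ) / (q : ℝ) ^ k :=
      lt_of_le_of_lt (Real.rpow_le_rpow_of_nonpos (by positivity) hp5q.le (by linarith)) hs4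
    -- take logs
    have hlhs : (0 : ℝ) < (5 * (q : ℝ)) ^ (-r) := by positivity
    have hlog := Real.log_lt_log hlhs hs5
    rw [Real.log_rpow h5q, Real.log_div (by positivity) (by positivity),
      Real.log_rpow hq0, Real.log_mul (by norm_num) (by positivity)] at hlog
    -- hlog : -r * (log 5 + log q) < log q - k * log q
    have hlogq : Real.log q < r * Real.log 5 / (k - 1 - r) := by
      rw [lt_div_iff₀ hε]
      nlinarith [hlog]
    have hqC : (q : ℝ) < C := by
      rw [hCdef]
      exact (Real.log_lt_iff_lt_exp hq0).mp hlogq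
    have hqB : (q : ℝ) ≤ (⌈5 * C⌉₊ : ℕ) := by
      have : (q : ℝ) ≤ 5 * C := by linarith
      exact this.trans (Nat.le_ceil _)
    have hpB : (p : ℝ) ≤ (⌈5 * C⌉₊ : ℕ) := by
      have : (p : ℝ) ≤ 5 * C := by linarith
      exact this.trans (Nat.le_ceil _)
    exact ⟨le_max_of_le_right (by exact_mod_cast hpB), le_max_of_le_right (by exact_mod_cast hqB)⟩
end

section
/- If the series ∑_{n=1}^∞ 1/(n^3 · sin(n)^2) converges, then for every real k > 5/2, the inequality |π − p/q| < 1/q^k has only finitely many coprime positive integer solutions (p, q); that is, the irrationality measure of π is at most 5/2. -/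
open Real

lemma sin_nat_ne_zero {p : ℕ} (hp : 0 < p) : Real.sin p ≠ 0 := by
  intro h
  rw [Real.sin_eq_zero_iff] at h
  obtain ⟨m, hm⟩ := h
  have hm0 : m ≠ 0 := by
    rintro rfl
    simp at hm
    have : (0:ℝ) < p := by exact_mod_cast hp
    linarith [hm]
  exact irrational_pi ⟨(p : ℚ) / (m : ℚ), by
    push_cast
    field_simp
    rw [mul_comm] at hm
    linarith [hm]⟩

-- p bounds from the approximation
lemma p_bounds {p q : ℕ} {k : ℝ} (hk : 0 < k) (hp : 0 < p) (hq : 0 < q)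
    (h : |π - (p : ℝ) / (q : ℝ)| < 1 / (q : ℝ) ^ k) :
    2 * q < p ∧ p < 5 * q := by
  have hq1 : (1:ℝ) ≤ (q:ℝ) := by exact_mod_cast hq
  have hqk : (1:ℝ) ≤ (q:ℝ) ^ k := Real.one_le_rpow hq1 hk.le
  have h1 : |π - (p : ℝ) / (q : ℝ)| < 1 := lt_of_lt_of_le h (by
    rw [div_le_one (by linarith)]; exact hqk)
  have hq0 : (0:ℝ) < q := by linarith
  rw [abs_lt] at h1
  have hpi1 : (3 : ℝ) < π := pi_gt_three
  have hpi2 : π < 3.15 := pi_lt_d2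
  have hpq : ((p:ℝ) / q) * q = p := div_mul_cancel₀ _ (ne_of_gt hq0)
  have hlow : (2:ℝ) * q < p := by nlinarith [h1.2]
  have hhigh : (p:ℝ) < 5 * q := by nlinarith [h1.1]
  constructor
  · exact_mod_cast hlow
  · exact_mod_cast hhigh

open Real in
theorem flint_hills_implies_mu_le (hsum : Summable (fun n : ℕ => 1 / ((n : ℝ) ^ 3 * Real.sin n ^ 2))) :
    ∀ k : ℝ, 5 / 2 < k →
      {pq : ℕ × ℕ | 0 < pq.1 ∧ 0 < pq.2 ∧ Nat.Coprime pq.1 pq.2 ∧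
        |π - (pq.1 : ℝ) / (pq.2 : ℝ)| < 1 / (pq.2 : ℝ) ^ k}.Finite := by
  intro k hk
  by_contra hfin
  have hk0 : 0 < k := by linarith
  have he : 0 < 2 * k - 5 := by linarith
  -- terms tend to 0
  have htend := hsum.tendsto_atTop_zero
  rw [Metric.tendsto_atTop] at htend
  obtain ⟨N, hN⟩ := htend 1 one_pos
  -- choose Q with N ≤ 2*Q and 125 ≤ Q^(2k-5)
  have h125 : Filter.Tendsto (fun Q : ℕ => (Q : ℝ) ^ (2 * k - 5)) Filter.atTop Filter.atTop :=
    (tendsto_rpow_atTop he).comp tendsto_natCast_atTop_atTop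
  obtain ⟨Q0, hQ0⟩ := (h125.eventually_ge_atTop 125).exists_forall_of_atTop
  set Q := Q0 + N with hQdef
  -- find a solution with q > Q
  obtain ⟨⟨p, q⟩, hmem, hqQ⟩ :
      ∃ pq ∈ {pq : ℕ × ℕ | 0 < pq.1 ∧ 0 < pq.2 ∧ Nat.Coprime pq.1 pq.2 ∧
        |π - (pq.1 : ℝ) / (pq.2 : ℝ)| < 1 / (pq.2 : ℝ) ^ k}, Q < pq.2 := by
    by_contra hcon
    push_neg at hcon
    apply hfin
    apply Set.Finite.subset ((Set.finite_Iic (5 * Q)).prod (Set.finite_Iic Q))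
    rintro ⟨p, q⟩ hpq
    obtain ⟨hp, hq, hcop, habs⟩ := hpq
    have hqQ : q ≤ Q := hcon _ ⟨hp, hq, hcop, habs⟩
    have hb := (p_bounds hk0 hp hq habs).2
    exact ⟨le_trans hb.le (by omega), hqQ⟩
  obtain ⟨hp, hq, -, habs⟩ := hmem
  dsimp only at hp hq habs hqQ
  obtain ⟨hlow, hhigh⟩ := p_bounds hk0 hp hq habs
  -- real versions
  have hq0 : (0:ℝ) < q := by exact_mod_cast hq
  have hq1 : (1:ℝ) ≤ q := by exact_mod_cast hq
  have hp0 : (0:ℝ) < p := by exact_mod_cast hp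
  have hqk : (0:ℝ) < (q:ℝ) ^ k := Real.rpow_pos_of_pos hq0 k
  -- |q*π - p| < q / q^k
  have habs2 : |(q:ℝ) * π - p| < (q:ℝ) / (q:ℝ) ^ k := by
    have : |π - (p:ℝ)/q| * q < (1 / (q:ℝ)^k) * q := by
      exact mul_lt_mul_of_pos_right habs hq0
    calc |(q:ℝ) * π - p| = |π - (p:ℝ)/q| * q := by
          rw [← abs_of_pos hq0, ← abs_mul]
          congr 1
          field_simp
          rw [abs_of_pos hq0]; ring
      _ < (1 / (q:ℝ)^k) * q := this
      _ = (q:ℝ) / (q:ℝ)^k := by ring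
  -- sin bound
  have hsin : |Real.sin p| < (q:ℝ) / (q:ℝ) ^ k := by
    have heq : Real.sin p = (-1:ℝ) ^ (q:ℤ) * Real.sin ((p:ℝ) - q * π) := by
      rw [← Real.sin_add_int_mul_pi ((p:ℝ) - q * π) (q:ℤ)]
      norm_num
    rw [heq]
    simp only [abs_mul, zpow_natCast, abs_pow, abs_neg, abs_one, one_pow, one_mul]
    calc |Real.sin ((p:ℝ) - q * π)| ≤ |(p:ℝ) - q * π| := Real.abs_sin_le_abs
      _ = |(q:ℝ) * π - p| := abs_sub_comm _ _
      _ < (q:ℝ) / (q:ℝ) ^ k := habs2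
  -- sin p ≠ 0
  have hsne : Real.sin p ≠ 0 := sin_nat_ne_zero hp
  have hsinsq : (0:ℝ) < Real.sin p ^ 2 := by positivity
  -- the term at p is large
  have hterm : (1:ℝ) ≤ 1 / ((p:ℝ) ^ 3 * Real.sin p ^ 2) := by
    rw [le_div_iff₀ (by positivity), one_mul]
    have h1 : Real.sin p ^ 2 < ((q:ℝ) / (q:ℝ) ^ k) ^ 2 := by
      rw [← sq_abs]
      apply sq_lt_sq' _ hsin
      linarith [abs_nonneg (Real.sin p)]
    have hhighR : (p:ℝ) < 5 * q := by exact_mod_cast hhigh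
    have hq2k0 : (0:ℝ) < (q:ℝ) ^ (2 * k) := Real.rpow_pos_of_pos hq0 _
    have hsq : ((q:ℝ) ^ k) ^ 2 = (q:ℝ) ^ (2 * k) := by
      rw [← Real.rpow_natCast ((q:ℝ) ^ k) 2, ← Real.rpow_mul hq0.le]
      norm_num [mul_comm]
    have h125q : (125:ℝ) ≤ (q:ℝ) ^ (2 * k - 5) := hQ0 q (by omega)
    have hsplit : (q:ℝ) ^ (2 * k) = (q:ℝ) ^ (2 * k - 5) * (q:ℝ) ^ (5:ℕ) := by
      rw [← Real.rpow_natCast (q:ℝ) 5, ← Real.rpow_add hq0]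
      norm_num
    have hkey : 125 * (q:ℝ) ^ (5:ℕ) ≤ (q:ℝ) ^ (2 * k) := by
      rw [hsplit]
      exact mul_le_mul_of_nonneg_right h125q (by positivity)
    rw [div_pow, hsq] at h1
    calc (p:ℝ) ^ 3 * Real.sin p ^ 2
        ≤ (5 * (q:ℝ)) ^ 3 * ((q:ℝ) ^ 2 / (q:ℝ) ^ (2 * k)) := by
          apply mul_le_mul _ h1.le hsinsq.le (by positivity)
          exact pow_le_pow_left₀ hp0.le hhighR.le 3
      _ = 125 * (q:ℝ) ^ (5:ℕ) / (q:ℝ) ^ (2 * k) := by ring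
      _ ≤ 1 := by rw [div_le_one hq2k0]; exact hkey
  have hpN : N ≤ p := by omega
  have hfinal := hN p hpN
  rw [Real.dist_0_eq_abs] at hfinal
  have hle := le_abs_self (1 / ((p:ℝ) ^ 3 * Real.sin p ^ 2))
  linarith
end

section
/- Assuming that for every k > 7.6064 the inequality |π − p/q| < 1/q^k has only finitely many coprime positive integer solutions, the sequence 1/(n^7 · |sin n|) tends to 0 as n → ∞. -/
open Real Filter

private lemma jordan_abs {x : ℝ} (hx : |x| ≤ π / 2) : 2 / π * |x| ≤ |Real.sin x| := by
  have hpi := Real.pi_pos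
  have h1 : |Real.sin x| = Real.sin |x| := by
    rcases le_or_gt 0 x with h | h
    · rw [abs_of_nonneg h, abs_of_nonneg (Real.sin_nonneg_of_nonneg_of_le_pi h (by
        have := le_trans (le_abs_self x) hx; linarith))]
    · have h2 : (0:ℝ) ≤ -x := by linarith
      have h3 : -x ≤ π := by have := le_trans (neg_le_abs x) hx; linarith
      have h4 : 0 ≤ -Real.sin x := by
        rw [← Real.sin_neg]; exact Real.sin_nonneg_of_nonneg_of_le_pi h2 h3
      rw [abs_of_neg h, Real.sin_neg, abs_of_nonpos (by linarith)]
  rw [h1]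
  exact Real.mul_le_sin (abs_nonneg x) hx

set_option maxHeartbeats 1000000 in
private lemma pi_rat_bound
    (hfin : {pq : ℕ × ℕ | 0 < pq.1 ∧ 0 < pq.2 ∧ Nat.Coprime pq.1 pq.2 ∧
        |π - (pq.1 : ℝ) / (pq.2 : ℝ)| < 1 / (pq.2 : ℝ) ^ (7.61 : ℝ)}.Finite) :
    ∃ ε > 0, ∀ p q : ℕ, 0 < p → 0 < q →
      min ε (1 / (q : ℝ) ^ (7.61 : ℝ)) ≤ |π - (p : ℝ) / (q : ℝ)| := by
  classical
  set G := insert ((1, 1) : ℕ × ℕ) hfin.toFinset with hG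
  have hGne : ((G.image fun pq => |π - (pq.1 : ℝ) / (pq.2 : ℝ)|)).Nonempty :=
    ⟨_, Finset.mem_image_of_mem _ (Finset.mem_insert_self _ _)⟩
  set ε := (G.image fun pq => |π - (pq.1 : ℝ) / (pq.2 : ℝ)|).min' hGne with hεdef
  have hpos : ∀ pq : ℕ × ℕ, 0 < pq.1 → 0 < pq.2 → 0 < |π - (pq.1 : ℝ) / (pq.2 : ℝ)| := by
    intro pq hp hq
    have hne : π ≠ (pq.1 : ℝ) / (pq.2 : ℝ) := by
      intro h
      apply irrational_pi.ne_rat ((pq.1 : ℚ) / (pq.2 : ℚ))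
      rw [h]; push_cast; ring
    rw [abs_pos, sub_ne_zero]; exact hne
  have hεpos : 0 < ε := by
    obtain ⟨pq, hpq, hval⟩ := Finset.mem_image.mp (Finset.min'_mem _ hGne)
    rw [hεdef, ← hval]
    rcases Finset.mem_insert.mp hpq with h | h
    · exact h ▸ hpos (1, 1) one_pos one_pos
    · have h' := hfin.mem_toFinset.mp h
      exact hpos pq h'.1 h'.2.1
  have hcop : ∀ p q : ℕ, 0 < p → 0 < q → Nat.Coprime p q →
      min ε (1 / (q : ℝ) ^ (7.61 : ℝ)) ≤ |π - (p : ℝ) / (q : ℝ)| := by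
    intro p q hp hq hc
    by_cases hmem : (p, q) ∈ hfin.toFinset
    · exact le_trans (min_le_left _ _)
        (Finset.min'_le _ _ (Finset.mem_image_of_mem _ (Finset.mem_insert_of_mem hmem)))
    · have h' : ¬(|π - (p : ℝ) / (q : ℝ)| < 1 / (q : ℝ) ^ (7.61 : ℝ)) := by
        intro hlt
        exact hmem (hfin.mem_toFinset.mpr ⟨hp, hq, hc, hlt⟩)
      exact le_trans (min_le_right _ _) (not_lt.mp h')
  refine ⟨ε, hεpos, fun p q hp hq => ?_⟩
  have hd0 : 0 < Nat.gcd p q := Nat.gcd_pos_of_pos_left _ hp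
  have hp' : 0 < p / Nat.gcd p q :=
    Nat.div_pos (Nat.le_of_dvd hp (Nat.gcd_dvd_left p q)) hd0
  have hq' : 0 < q / Nat.gcd p q :=
    Nat.div_pos (Nat.le_of_dvd hq (Nat.gcd_dvd_right p q)) hd0
  have hc : Nat.Coprime (p / Nat.gcd p q) (q / Nat.gcd p q) :=
    Nat.coprime_div_gcd_div_gcd hd0
  have hpe : p / Nat.gcd p q * Nat.gcd p q = p := Nat.div_mul_cancel (Nat.gcd_dvd_left p q)
  have hqe : q / Nat.gcd p q * Nat.gcd p q = q := Nat.div_mul_cancel (Nat.gcd_dvd_right p q)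
  have hnat : p * (q / Nat.gcd p q) = p / Nat.gcd p q * q := by
    rw [← Nat.mul_div_assoc p (Nat.gcd_dvd_right p q), mul_comm (p / Nat.gcd p q) q,
      ← Nat.mul_div_assoc q (Nat.gcd_dvd_left p q), mul_comm]
  have hfrac : (p : ℝ) / (q : ℝ) = ((p / Nat.gcd p q : ℕ) : ℝ) / ((q / Nat.gcd p q : ℕ) : ℝ) := by
    rw [div_eq_div_iff (Nat.cast_ne_zero.mpr hq.ne') (Nat.cast_ne_zero.mpr hq'.ne')]
    exact_mod_cast hnat
  have hqq : ((q / Nat.gcd p q : ℕ) : ℝ) ^ (7.61 : ℝ) ≤ (q : ℝ) ^ (7.61 : ℝ) :=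
    Real.rpow_le_rpow (by positivity) (by exact_mod_cast Nat.div_le_self q _) (by norm_num)
  have h1 : 1 / (q : ℝ) ^ (7.61 : ℝ) ≤ 1 / ((q / Nat.gcd p q : ℕ) : ℝ) ^ (7.61 : ℝ) :=
    one_div_le_one_div_of_le (Real.rpow_pos_of_pos (by exact_mod_cast hq') _) hqq
  rw [hfrac]
  exact le_trans (min_le_min le_rfl h1) (hcop _ _ hp' hq' hc)

open Real Filter in
theorem seq_n7_sin_tendsto_zero
    (hmu : ∀ k : ℝ, 7.6064 < k →
      {pq : ℕ × ℕ | 0 < pq.1 ∧ 0 < pq.2 ∧ Nat.Coprime pq.1 pq.2 ∧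
        |π - (pq.1 : ℝ) / (pq.2 : ℝ)| < 1 / (pq.2 : ℝ) ^ k}.Finite) :
    Tendsto (fun n : ℕ => 1 / ((n : ℝ) ^ 7 * |Real.sin n|)) atTop (nhds 0) := by
  have hpi := Real.pi_pos
  obtain ⟨ε, hε, hbound⟩ := pi_rat_bound (hmu 7.61 (by norm_num))
  have t8 : Tendsto (fun n : ℕ => ((n : ℝ) / 8) ^ (7.61 : ℝ)) atTop atTop :=
    (tendsto_rpow_atTop (by norm_num)).comp
      (tendsto_natCast_atTop_atTop.atTop_div_const (by norm_num))
  have h2 : ∀ᶠ n : ℕ in atTop, 1 / ((n : ℝ) / 8) ^ (7.61 : ℝ) ≤ ε := by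
    filter_upwards [t8.eventually_ge_atTop (1 / ε)] with n hn
    have hX : 0 < ((n : ℝ) / 8) ^ (7.61 : ℝ) := lt_of_lt_of_le (by positivity) hn
    calc 1 / ((n : ℝ) / 8) ^ (7.61 : ℝ) ≤ 1 / (1 / ε) :=
          one_div_le_one_div_of_le (by positivity) hn
      _ = ε := one_div_one_div ε
  have key : ∀ᶠ n : ℕ in atTop,
      1 / (4 * π) * (n : ℝ) ^ (0.39 : ℝ) ≤ (n : ℝ) ^ 7 * |Real.sin n| := by
    filter_upwards [eventually_ge_atTop 8, h2] with n hn8 hnε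
    have hn8r : (8 : ℝ) ≤ (n : ℝ) := by exact_mod_cast hn8
    have hn0 : (0 : ℝ) < n := by linarith
    set M : ℤ := round ((n : ℝ) / π) with hM
    have habs : |(n : ℝ) / π - (M : ℝ)| ≤ 1 / 2 := abs_sub_round _
    have habs' := abs_le.mp habs
    have hx4 : (n : ℝ) / 4 ≤ (n : ℝ) / π :=
      div_le_div_of_nonneg_left hn0.le hpi Real.pi_le_four
    have hx3 : (n : ℝ) / π ≤ (n : ℝ) / 3 :=
      div_le_div_of_nonneg_left hn0.le (by norm_num) Real.pi_gt_three.le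
    have hMr : (n : ℝ) / 8 ≤ (M : ℝ) := by nlinarith
    have hMn : (M : ℝ) ≤ (n : ℝ) := by nlinarith
    have hM0 : 0 ≤ M := by exact_mod_cast (by linarith : (0:ℝ) ≤ (M : ℝ))
    set m : ℕ := M.toNat with hm
    have hmM : (m : ℝ) = (M : ℝ) := by
      have h := Int.toNat_of_nonneg hM0
      exact_mod_cast congrArg (fun z : ℤ => (z : ℝ)) h
    have hm8 : (n : ℝ) / 8 ≤ (m : ℝ) := by rw [hmM]; exact hMr
    have hm_pos : 0 < m := by exact_mod_cast (by linarith : (0:ℝ) < (m : ℝ))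
    have hmn : (m : ℝ) ≤ (n : ℝ) := by rw [hmM]; exact hMn
    have hm0r : (0 : ℝ) < (m : ℝ) := by linarith
    -- sin identity
    have hsin : |Real.sin ((n : ℝ) - (M : ℝ) * π)| = |Real.sin (n : ℝ)| := by
      rw [Real.sin_sub_int_mul_pi, abs_mul]
      rcases Int.even_or_odd M with hpar | hpar
      · rw [hpar.neg_one_zpow]; simp
      · rw [hpar.neg_one_zpow]; simp
    -- half-period bound
    have hy : (n : ℝ) - (M : ℝ) * π = ((n : ℝ) / π - (M : ℝ)) * π := by
      field_simp
    have habsy : |(n : ℝ) - (M : ℝ) * π| ≤ π / 2 := by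
      rw [hy, abs_mul, abs_of_pos hpi]
      nlinarith [abs_nonneg ((n : ℝ) / π - (M : ℝ))]
    -- |n - Mπ| = m * |π - n/m|
    have hy_eq : |(n : ℝ) - (M : ℝ) * π| = (m : ℝ) * |π - (n : ℝ) / (m : ℝ)| := by
      have h : (n : ℝ) - (M : ℝ) * π = -((m : ℝ) * (π - (n : ℝ) / (m : ℝ))) := by
        have hne : (m : ℝ) ≠ 0 := hm0r.ne'
        rw [← hmM]
        field_simp
        ring
      rw [h, abs_neg, abs_mul, abs_of_pos hm0r]
    -- diophantine lower bound
    have hmk : 1 / (m : ℝ) ^ (7.61 : ℝ) ≤ ε := by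
      refine le_trans ?_ hnε
      exact one_div_le_one_div_of_le (Real.rpow_pos_of_pos (by linarith) _)
        (Real.rpow_le_rpow (by positivity) hm8 (by norm_num))
    have hdio : 1 / (m : ℝ) ^ (7.61 : ℝ) ≤ |π - (n : ℝ) / (m : ℝ)| := by
      have := hbound n m (by exact_mod_cast hn0) hm_pos
      rwa [min_eq_right hmk] at this
    have hnk : 1 / (n : ℝ) ^ (7.61 : ℝ) ≤ 1 / (m : ℝ) ^ (7.61 : ℝ) :=
      one_div_le_one_div_of_le (Real.rpow_pos_of_pos hm0r _)
        (Real.rpow_le_rpow (by positivity) hmn (by norm_num))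
    -- assemble
    have hs1 : 2 / π * ((n : ℝ) / 8 * (1 / (n : ℝ) ^ (7.61 : ℝ))) ≤ |Real.sin (n : ℝ)| := by
      have hmul : (n : ℝ) / 8 * (1 / (n : ℝ) ^ (7.61 : ℝ)) ≤
          (m : ℝ) * |π - (n : ℝ) / (m : ℝ)| :=
        mul_le_mul hm8 (le_trans hnk hdio) (by positivity) hm0r.le
      calc 2 / π * ((n : ℝ) / 8 * (1 / (n : ℝ) ^ (7.61 : ℝ)))
          ≤ 2 / π * ((m : ℝ) * |π - (n : ℝ) / (m : ℝ)|) :=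
            mul_le_mul_of_nonneg_left hmul (by positivity)
        _ = 2 / π * |(n : ℝ) - (M : ℝ) * π| := by rw [hy_eq]
        _ ≤ |Real.sin ((n : ℝ) - (M : ℝ) * π)| := jordan_abs habsy
        _ = |Real.sin (n : ℝ)| := hsin
    have heq : 1 / (4 * π) * (n : ℝ) ^ (0.39 : ℝ) =
        (n : ℝ) ^ 7 * (2 / π * ((n : ℝ) / 8 * (1 / (n : ℝ) ^ (7.61 : ℝ)))) := by
      have e1 : (n : ℝ) ^ (0.39 : ℝ) = (n : ℝ) ^ (8 : ℕ) / (n : ℝ) ^ (7.61 : ℝ) := by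
        rw [← Real.rpow_natCast (n : ℝ) 8, ← Real.rpow_sub hn0]
        norm_num
      have hk0 : (0 : ℝ) < (n : ℝ) ^ (7.61 : ℝ) := Real.rpow_pos_of_pos hn0 _
      rw [e1]
      field_simp
      ring
    rw [heq]
    exact mul_le_mul_of_nonneg_left hs1 (by positivity)
  have t : Tendsto (fun n : ℕ => 1 / (4 * π) * (n : ℝ) ^ (0.39 : ℝ)) atTop atTop :=
    Tendsto.const_mul_atTop (by positivity)
      ((tendsto_rpow_atTop (by norm_num)).comp tendsto_natCast_atTop_atTop)
  have main : Tendsto (fun n : ℕ => (n : ℝ) ^ 7 * |Real.sin n|) atTop atTop :=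
    tendsto_atTop_mono' atTop key t
  simpa only [one_div, Pi.inv_def] using main.inv_tendsto_atTop
end
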